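/- (Main approximation theorem) Let α < β, let (b_m)_{m≥1} be positive reals with lim_{m→∞} b_m²/m = 0, and let φ₁, φ₂ : ℝ → ℝ be bounded, uniformly continuous functions with inf_{x ∈ ℝ} (φ₂(x) − φ₁(x)) > 0. Let g : ℝ² → ℝ be bounded and uniformly continuous. For each m ≥ 1 let m_k^{(m)} ≥ 1 (0 ≤ k ≤ m) be positive integers such that min_{0 ≤ k ≤ m} m_k^{(m)} → ∞ as m → ∞. Let J_m = [α b_m, β b_m] and Δ_m = {(x,y) : α b_m ≤ x ≤ β b_m, φ₁(x) ≤ y ≤ φ₂(x)}. Then the bivariate shifted Bernstein–Chlodowsky–Stancu operators converge to g uniformly: sup_{(x,y) ∈ Δ_m} |B̃_m^{Cl}[g; Δ_m](x, y) − g(x, y)| → 0 as m → ∞. -/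

import Mathlib

open Finset Filter Real

/-- Shifted Bernstein–Chlodowsky basis polynomial on `J = [αb, βb]`. -/
noncomputable def qt (α β b : ℝ) (m k : ℕ) (x : ℝ) : ℝ :=
  (1 / ((β - α) ^ m * b ^ m)) * (m.choose k : ℝ) * (x - α * b) ^ k * (β * b - x) ^ (m - k)

/-- Basis polynomial `q̃_{n,j}(y; [φ₁(x), φ₂(x)])`. -/
noncomputable def qy (φ₁ φ₂ : ℝ → ℝ) (x : ℝ) (n j : ℕ) (y : ℝ) : ℝ :=
  (n.choose j : ℝ) * ((y - φ₁ x) / (φ₂ x - φ₁ x)) ^ j *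
    ((φ₂ x - y) / (φ₂ x - φ₁ x)) ^ (n - j)

/-- Bivariate shifted Bernstein–Chlodowsky–Stancu operator on the domain `Δ`
bounded by `y = φ₁(x)`, `y = φ₂(x)`, `x = αb`, `x = βb`. -/
noncomputable def BivCl (α β b : ℝ) (φ₁ φ₂ : ℝ → ℝ) (m : ℕ) (mk : ℕ → ℕ)
    (g : ℝ → ℝ → ℝ) (x y : ℝ) : ℝ :=
  ∑ k ∈ Finset.range (m + 1), ∑ j ∈ Finset.range (mk k + 1),
    g ((β - α) * b * ((k : ℝ) / m) + α * b)
      ((φ₂ ((β - α) * b * ((k : ℝ) / m) + α * b) - φ₁ ((β - α) * b * ((k : ℝ) / m) + α * b)) *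
          ((j : ℝ) / mk k) + φ₁ ((β - α) * b * ((k : ℝ) / m) + α * b)) *
      qt α β b m k x * qy φ₁ φ₂ x (mk k) j y

/-! ### Auxiliary Bernstein basis machinery -/

noncomputable def bernR (n k : ℕ) (u : ℝ) : ℝ :=
  (n.choose k : ℝ) * u ^ k * (1 - u) ^ (n - k)

lemma bernR_nonneg {n k : ℕ} {u : ℝ} (hu : u ∈ Set.Icc (0:ℝ) 1) : 0 ≤ bernR n k u := by
  have h1 := hu.1; have h2 := hu.2
  have : (0:ℝ) ≤ 1 - u := by linarith
  unfold bernR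
  positivity

lemma bernR_sum (n : ℕ) (u : ℝ) : ∑ k ∈ range (n+1), bernR n k u = 1 := by
  have h := add_pow u (1-u) n
  simp only [add_sub_cancel, one_pow] at h
  rw [show ∑ k ∈ range (n+1), bernR n k u
      = ∑ k ∈ range (n+1), u ^ k * (1-u) ^ (n-k) * (n.choose k : ℝ) from
    Finset.sum_congr rfl fun k _ => by unfold bernR; ring, ← h]

lemma bernR_eq_bernstein {n k : ℕ} {u : ℝ} (hu : u ∈ Set.Icc (0:ℝ) 1) :
    bernR n k u = bernstein n k ⟨u, hu⟩ := by
  simp [bernR, bernstein_apply]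

lemma bernR_var {n : ℕ} (hn : 1 ≤ n) {u : ℝ} (hu : u ∈ Set.Icc (0:ℝ) 1) :
    ∑ k ∈ range (n+1), ((k:ℝ)/n - u) ^ 2 * bernR n k u = u * (1 - u) / n := by
  have hn' : (0:ℝ) < n := by exact_mod_cast hn
  have h := bernstein.variance (n := n) (by omega) (⟨u, hu⟩ : unitInterval)
  rw [← Fin.sum_univ_eq_sum_range]
  have : ∀ k : Fin (n+1), ((k:ℝ)/n - u)^2 * bernR n k u
      = ((⟨u,hu⟩ : unitInterval) - bernstein.z k : ℝ)^2 * bernstein n k ⟨u,hu⟩ := by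
    intro k
    rw [bernR_eq_bernstein hu]
    congr 1
    rw [show ((⟨u,hu⟩ : unitInterval) : ℝ) - (bernstein.z k : ℝ) = -((k:ℝ)/n - u) by
      simp only [bernstein.z]; ring]
    ring
  rw [Finset.sum_congr rfl fun k _ => this k, h]

lemma bernR_cheb {n : ℕ} (hn : 1 ≤ n) {u : ℝ} (hu : u ∈ Set.Icc (0:ℝ) 1)
    {δ : ℝ} (hδ : 0 < δ) [DecidablePred fun k : ℕ => δ ≤ |(k:ℝ)/n - u|] :
    ∑ k ∈ (range (n+1)).filter (fun k : ℕ => δ ≤ |(k:ℝ)/n - u|), bernR n k u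
      ≤ 1 / (4 * n * δ ^ 2) := by
  have hn' : (0:ℝ) < n := by exact_mod_cast hn
  have h1 : δ^2 * ∑ k ∈ (range (n+1)).filter (fun k : ℕ => δ ≤ |(k:ℝ)/n - u|), bernR n k u
      ≤ ∑ k ∈ range (n+1), ((k:ℝ)/n - u) ^ 2 * bernR n k u := by
    rw [Finset.mul_sum]
    refine le_trans (Finset.sum_le_sum ?_) (Finset.sum_le_sum_of_subset_of_nonneg
      (Finset.filter_subset _ _) ?_)
    · intro k hk
      rw [Finset.mem_filter] at hk
      have h2 : δ^2 ≤ ((k:ℝ)/n - u)^2 := by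
        have := hk.2
        nlinarith [abs_nonneg ((k:ℝ)/n - u), sq_abs ((k:ℝ)/n - u)]
      exact mul_le_mul_of_nonneg_right h2 (bernR_nonneg hu)
    · intro k _ _
      exact mul_nonneg (sq_nonneg _) (bernR_nonneg hu)
  rw [bernR_var hn hu] at h1
  have h3 : u * (1 - u) / n ≤ 1 / (4 * n) := by
    rw [div_le_div_iff₀ hn' (by positivity)]
    nlinarith [hu.1, hu.2, sq_nonneg (2*u-1), hn']
  have hδ2 : (0:ℝ) < δ^2 := by positivity
  rw [le_div_iff₀ (by positivity)]
  calc (∑ k ∈ (range (n+1)).filter (fun k : ℕ => δ ≤ |(k:ℝ)/n - u|), bernR n k u) * (4 * n * δ^2)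
      = (δ^2 * ∑ k ∈ (range (n+1)).filter (fun k : ℕ => δ ≤ |(k:ℝ)/n - u|), bernR n k u) * (4*n) := by
        ring
    _ ≤ (u * (1-u)/n) * (4*n) := mul_le_mul_of_nonneg_right h1 (by positivity)
    _ ≤ (1/(4*n)) * (4*n) := mul_le_mul_of_nonneg_right h3 (by positivity)
    _ = 1 := by field_simp

lemma split_bound {n : ℕ} {w a : ℕ → ℝ} {M ε t : ℝ}
    (hw : ∀ k ∈ range (n+1), 0 ≤ w k) (hsum : ∑ k ∈ range (n+1), w k = 1)
    (P : ℕ → Prop) [DecidablePred P]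
    (htail : ∑ k ∈ (range (n+1)).filter P, w k ≤ t)
    (hM : ∀ k ∈ range (n+1), |a k| ≤ M)
    (hg : ∀ k ∈ range (n+1), ¬ P k → |a k| ≤ ε)
    (hε : 0 ≤ ε) (hM0 : 0 ≤ M) :
    |∑ k ∈ range (n+1), a k * w k| ≤ ε + M * t := by
  calc |∑ k ∈ range (n+1), a k * w k| ≤ ∑ k ∈ range (n+1), |a k * w k| :=
        Finset.abs_sum_le_sum_abs _ _
    _ = ∑ k ∈ range (n+1), |a k| * w k := by
        refine Finset.sum_congr rfl fun k hk => ?_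
        rw [abs_mul, abs_of_nonneg (hw k hk)]
    _ = (∑ k ∈ (range (n+1)).filter P, |a k| * w k)
        + ∑ k ∈ (range (n+1)).filter (fun k => ¬ P k), |a k| * w k :=
        (Finset.sum_filter_add_sum_filter_not _ _ _).symm
    _ ≤ M * t + ε * 1 := by
        gcongr ?_ + ?_
        · calc ∑ k ∈ (range (n+1)).filter P, |a k| * w k
              ≤ ∑ k ∈ (range (n+1)).filter P, M * w k := by
                refine Finset.sum_le_sum fun k hk => ?_
                exact mul_le_mul_of_nonneg_right (hM k (Finset.mem_filter.mp hk).1)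
                  (hw k (Finset.mem_filter.mp hk).1)
            _ = M * ∑ k ∈ (range (n+1)).filter P, w k := by rw [Finset.mul_sum]
            _ ≤ M * t := mul_le_mul_of_nonneg_left htail hM0
        · calc ∑ k ∈ (range (n+1)).filter (fun k => ¬ P k), |a k| * w k
              ≤ ∑ k ∈ (range (n+1)).filter (fun k => ¬ P k), ε * w k := by
                refine Finset.sum_le_sum fun k hk => ?_
                have hk' := Finset.mem_filter.mp hk
                exact mul_le_mul_of_nonneg_right (hg k hk'.1 hk'.2) (hw k hk'.1)
            _ = ε * ∑ k ∈ (range (n+1)).filter (fun k => ¬ P k), w k := by rw [Finset.mul_sum]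
            _ ≤ ε * 1 := by
                refine mul_le_mul_of_nonneg_left ?_ hε
                rw [← hsum]
                exact Finset.sum_le_sum_of_subset_of_nonneg (Finset.filter_subset _ _)
                  fun k hk _ => hw k hk
    _ = ε + M * t := by ring

lemma wsum_abs_le {n : ℕ} {w a : ℕ → ℝ} {M : ℝ}
    (hw : ∀ k ∈ range (n+1), 0 ≤ w k) (hsum : ∑ k ∈ range (n+1), w k = 1)
    (hM : ∀ k ∈ range (n+1), |a k| ≤ M) :
    |∑ k ∈ range (n+1), a k * w k| ≤ M := by
  classical
  have hM0 : 0 ≤ M := le_trans (abs_nonneg (a 0)) (hM 0 (by simp))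
  have h := split_bound (t := 0) hw hsum (fun _ => False) (by simp)
    hM (fun k hk _ => hM k hk) hM0 hM0
  simpa using h

private lemma pow_split {c u : ℝ} {m k : ℕ} (hk : k ≤ m) :
    (c * u) ^ k * (c * (1 - u)) ^ (m - k) = c ^ m * (u ^ k * (1 - u) ^ (m - k)) := by
  rw [mul_pow, mul_pow, show c ^ k * u ^ k * (c ^ (m-k) * (1-u)^(m-k))
      = (c ^ k * c ^ (m-k)) * (u ^ k * (1-u)^(m-k)) by ring, ← pow_add,
    Nat.add_sub_cancel' hk]

lemma qt_eq {α β b : ℝ} (hαβ : α < β) (hb : 0 < b) {m k : ℕ} (hk : k ≤ m) (x : ℝ) :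
    qt α β b m k x = bernR m k ((x - α * b) / ((β - α) * b)) := by
  have hc0 : 0 < (β - α) * b := mul_pos (by linarith) hb
  have hc : (β - α) * b ≠ 0 := ne_of_gt hc0
  have h1 : x - α * b = (β - α) * b * ((x - α * b) / ((β - α) * b)) := by
    rw [mul_div_cancel₀ _ hc]
  have h2 : β * b - x = (β - α) * b * (1 - (x - α * b) / ((β - α) * b)) := by
    rw [mul_sub, ← h1]; ring
  have h3 : (x - α * b) ^ k * (β * b - x) ^ (m - k)
      = ((β - α) * b) ^ m * (((x - α * b) / ((β - α) * b)) ^ k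
        * (1 - (x - α * b) / ((β - α) * b)) ^ (m - k)) := by
    conv_lhs => rw [h1, h2, pow_split hk]
  have hcm : ((β - α) * b) ^ m ≠ 0 := pow_ne_zero _ hc
  unfold qt bernR
  rw [mul_assoc, h3, show (β - α) ^ m * b ^ m = ((β - α) * b) ^ m from (mul_pow _ _ _).symm]
  field_simp

lemma qy_eq {φ₁ φ₂ : ℝ → ℝ} {x : ℝ} (hgap : 0 < φ₂ x - φ₁ x) (n j : ℕ) (y : ℝ) :
    qy φ₁ φ₂ x n j y = bernR n j ((y - φ₁ x) / (φ₂ x - φ₁ x)) := by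
  have hc : φ₂ x - φ₁ x ≠ 0 := ne_of_gt hgap
  unfold qy bernR
  congr 1
  rw [show (1 : ℝ) - (y - φ₁ x) / (φ₂ x - φ₁ x) = (φ₂ x - y) / (φ₂ x - φ₁ x) by
    field_simp; ring]

lemma double_bound {m : ℕ} {n : ℕ → ℕ} (G : ℕ → ℕ → ℝ) (gxy : ℝ) {u v M ε2 ε8 δ₁ δ₂ : ℝ}
    (hm : 1 ≤ m) (hn : ∀ k ∈ range (m+1), 1 ≤ n k)
    (hu : u ∈ Set.Icc (0:ℝ) 1) (hv : v ∈ Set.Icc (0:ℝ) 1)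
    (hδ₁ : 0 < δ₁) (hδ₂ : 0 < δ₂) (hM0 : 0 ≤ M)
    (hM : ∀ k j, |G k j - gxy| ≤ M)
    (hε2 : 0 ≤ ε2) (hε8 : 0 ≤ ε8)
    (hinner : ∀ k ∈ range (m+1), M * (1/(4*(n k : ℝ)*δ₂^2)) ≤ ε8)
    (hgood : ∀ k ∈ range (m+1), |(k:ℝ)/m - u| < δ₁ →
      ∀ j ∈ range (n k + 1), |(j:ℝ)/(n k) - v| < δ₂ → |G k j - gxy| ≤ ε2) :
    |∑ k ∈ range (m+1), (∑ j ∈ range (n k + 1), (G k j - gxy) * bernR (n k) j v) * bernR m k u|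
      ≤ (ε2 + ε8) + M * (1/(4*(m:ℝ)*δ₁^2)) := by
  classical
  have hMt : ∀ k ∈ range (m+1),
      |∑ j ∈ range (n k + 1), (G k j - gxy) * bernR (n k) j v| ≤ M := fun k _ =>
    wsum_abs_le (fun j _ => bernR_nonneg hv) (bernR_sum _ v) (fun j _ => hM k j)
  have h := split_bound (ε := ε2 + ε8) (t := 1/(4*(m:ℝ)*δ₁^2))
    (fun k _ => bernR_nonneg hu) (bernR_sum m u)
    (fun k : ℕ => δ₁ ≤ |(k:ℝ)/m - u|) (bernR_cheb hm hu hδ₁) hMt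
    (fun k hk hk1 => by
      have hk1' : |(k:ℝ)/m - u| < δ₁ := not_le.mp hk1
      have hin := split_bound (fun j _ => bernR_nonneg hv) (bernR_sum (n k) v)
        (fun j : ℕ => δ₂ ≤ |(j:ℝ)/(n k) - v|) (bernR_cheb (hn k hk) hv hδ₂)
        (fun j _ => hM k j)
        (fun j hj hj2 => hgood k hk hk1' j hj (not_le.mp hj2)) hε2 hM0
      exact le_trans hin (by linarith [hinner k hk]))
    (by linarith) hM0
  exact h

set_option maxHeartbeats 1000000 in
theorem stmt18 (α β : ℝ) (hαβ : α < β) (b : ℕ → ℝ) (hb : ∀ m, 1 ≤ m → 0 < b m)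
    (hlim : Filter.Tendsto (fun m : ℕ => (b m) ^ 2 / m) Filter.atTop (nhds 0))
    (φ₁ φ₂ : ℝ → ℝ)
    (hφ₁bdd : ∃ C, ∀ x, |φ₁ x| ≤ C) (hφ₂bdd : ∃ C, ∀ x, |φ₂ x| ≤ C)
    (hφ₁u : UniformContinuous φ₁) (hφ₂u : UniformContinuous φ₂)
    (hgap : ∃ c > (0 : ℝ), ∀ x, c ≤ φ₂ x - φ₁ x)
    (g : ℝ → ℝ → ℝ) (hgbdd : ∃ C, ∀ x y, |g x y| ≤ C)
    (hgu : UniformContinuous (fun p : ℝ × ℝ => g p.1 p.2))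
    (mk : ℕ → ℕ → ℕ) (hmk : ∀ m, ∀ k ≤ m, 1 ≤ mk m k)
    (hmkmin : ∀ C : ℕ, ∃ N, ∀ m ≥ N, ∀ k ≤ m, C ≤ mk m k) :
    ∀ ε > 0, ∃ N, ∀ m ≥ N, 1 ≤ m →
      ∀ x ∈ Set.Icc (α * b m) (β * b m), ∀ y ∈ Set.Icc (φ₁ x) (φ₂ x),
        |BivCl α β (b m) φ₁ φ₂ m (mk m) g x y - g x y| < ε := by
  classical
  intro ε hε
  obtain ⟨Cg, hCg⟩ := hgbdd
  obtain ⟨C₁, hC₁⟩ := hφ₁bdd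
  obtain ⟨C₂, hC₂⟩ := hφ₂bdd
  obtain ⟨c₀, hc₀, hgapc⟩ := hgap
  have hβα : (0:ℝ) < β - α := by linarith
  have hCg0 : 0 ≤ Cg := le_trans (abs_nonneg _) (hCg 0 0)
  obtain ⟨M, hMdef⟩ : ∃ M : ℝ, M = 2 * Cg + 1 := ⟨_, rfl⟩
  have hM0 : 0 < M := by simp only [hMdef]; linarith
  have hMdiff : ∀ a b x y : ℝ, |g a b - g x y| ≤ M := by
    intro a b x y
    calc |g a b - g x y| ≤ |g a b| + |g x y| := abs_sub _ _
      _ ≤ Cg + Cg := add_le_add (hCg a b) (hCg x y)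
      _ ≤ M := by simp only [hMdef]; linarith
  -- uniform continuity of g
  obtain ⟨δg, hδg, hgu'⟩ := Metric.uniformContinuous_iff.mp hgu (ε/2) (by linarith)
  -- uniform continuity of φ₁, φ₂
  obtain ⟨δp₁, hδp₁, hφ₁'⟩ := Metric.uniformContinuous_iff.mp hφ₁u (δg/9) (by linarith)
  obtain ⟨δp₂, hδp₂, hφ₂'⟩ := Metric.uniformContinuous_iff.mp hφ₂u (δg/9) (by linarith)
  obtain ⟨D, hDdef⟩ : ∃ D : ℝ, D = C₁ + C₂ := ⟨_, rfl⟩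
  have hD0 : 0 ≤ D := by
    have := le_trans (abs_nonneg _) (hC₁ 0)
    have := le_trans (abs_nonneg _) (hC₂ 0)
    simp only [hDdef]; linarith
  obtain ⟨δ₂, hδ₂def⟩ : ∃ δ₂ : ℝ, δ₂ = δg / (3 * (D + 1)) := ⟨_, rfl⟩
  have hδ₂pos : 0 < δ₂ := by
    rw [hδ₂def]; exact div_pos hδg (by linarith)
  have hDδ₂ : D * δ₂ ≤ δg / 3 := by
    rw [hδ₂def, ← mul_div_assoc, div_le_div_iff₀ (by linarith) (by norm_num)]
    nlinarith [mul_nonneg hD0 hδg.le]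
  obtain ⟨δx, hδxdef⟩ : ∃ δx : ℝ, δx = min δg (min δp₁ δp₂) := ⟨_, rfl⟩
  have hδxpos : 0 < δx := by rw [hδxdef]; exact lt_min hδg (lt_min hδp₁ hδp₂)
  have hδxg : δx ≤ δg := by rw [hδxdef]; exact min_le_left _ _
  have hδxp₁ : δx ≤ δp₁ := by rw [hδxdef]; exact le_trans (min_le_right _ _) (min_le_left _ _)
  have hδxp₂ : δx ≤ δp₂ := by rw [hδxdef]; exact le_trans (min_le_right _ _) (min_le_right _ _)
  -- choose C₀ for the inner tail bound
  obtain ⟨C₀, hC₀⟩ := exists_nat_gt (2 * M / (δ₂^2 * ε))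
  obtain ⟨N₂, hN₂⟩ := hmkmin C₀
  -- choose N₁ for the outer tail bound
  obtain ⟨κ, hκdef⟩ : ∃ κ : ℝ, κ = δx^2 * ε / (2 * M * (β - α)^2) := ⟨_, rfl⟩
  have hκpos : 0 < κ := by
    rw [hκdef]
    apply div_pos (mul_pos (pow_pos hδxpos 2) hε)
    have := pow_pos hβα 2
    nlinarith
  obtain ⟨N₁, hN₁⟩ := Metric.tendsto_atTop.mp hlim κ hκpos
  refine ⟨max (max N₁ N₂) 1, fun m hm hm1 x hx y hy => ?_⟩
  have hmN₁ : m ≥ N₁ := le_trans (le_trans (le_max_left _ _) (le_max_left _ _)) hm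
  have hmN₂ : m ≥ N₂ := le_trans (le_trans (le_max_right _ _) (le_max_left _ _)) hm
  have hbm : 0 < b m := hb m hm1
  have hc0 : 0 < (β - α) * b m := mul_pos hβα hbm
  have hc : (β - α) * b m ≠ 0 := ne_of_gt hc0
  have hmr : (0:ℝ) < m := by exact_mod_cast hm1
  -- u and v
  obtain ⟨u, hudef⟩ : ∃ u : ℝ, u = (x - α * b m) / ((β - α) * b m) := ⟨_, rfl⟩
  have hu : u ∈ Set.Icc (0:ℝ) 1 := by
    constructor
    · rw [hudef]; exact div_nonneg (by linarith [hx.1]) hc0.le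
    · rw [hudef, div_le_one hc0]
      have := hx.2; nlinarith
  have hcu : (β - α) * b m * u = x - α * b m := by
    rw [hudef, mul_div_cancel₀ _ hc]
  have hd0 : 0 < φ₂ x - φ₁ x := lt_of_lt_of_le hc₀ (hgapc x)
  obtain ⟨v, hvdef⟩ : ∃ v : ℝ, v = (y - φ₁ x) / (φ₂ x - φ₁ x) := ⟨_, rfl⟩
  have hv : v ∈ Set.Icc (0:ℝ) 1 := by
    constructor
    · rw [hvdef]; exact div_nonneg (by linarith [hy.1]) hd0.le
    · rw [hvdef, div_le_one hd0]; linarith [hy.2]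
  have hdv : (φ₂ x - φ₁ x) * v = y - φ₁ x := by
    rw [hvdef, mul_div_cancel₀ _ (ne_of_gt hd0)]
  obtain ⟨δ₁, hδ₁def⟩ : ∃ δ₁ : ℝ, δ₁ = δx / ((β - α) * b m) := ⟨_, rfl⟩
  have hδ₁pos : 0 < δ₁ := by rw [hδ₁def]; exact div_pos hδxpos hc0
  -- rewrite the operator
  obtain ⟨G, hGdef⟩ : ∃ G : ℕ → ℕ → ℝ, G = fun (k j : ℕ) =>
    g ((β - α) * b m * ((k : ℝ) / m) + α * b m)
      ((φ₂ ((β - α) * b m * ((k : ℝ) / m) + α * b m)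
          - φ₁ ((β - α) * b m * ((k : ℝ) / m) + α * b m)) *
          ((j : ℝ) / (mk m k)) + φ₁ ((β - α) * b m * ((k : ℝ) / m) + α * b m)) := ⟨_, rfl⟩
  have e1 : BivCl α β (b m) φ₁ φ₂ m (mk m) g x y
      = ∑ k ∈ range (m+1), ∑ j ∈ range (mk m k + 1),
          G k j * bernR (mk m k) j v * bernR m k u := by
    unfold BivCl
    refine Finset.sum_congr rfl fun k hk => Finset.sum_congr rfl fun j hj => ?_
    rw [qt_eq hαβ hbm (Finset.mem_range_succ_iff.mp hk) x, qy_eq hd0 (mk m k) j y,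
      ← hudef, ← hvdef, hGdef]
    ring
  have e2 : g x y = ∑ k ∈ range (m+1),
      (∑ j ∈ range (mk m k + 1), g x y * bernR (mk m k) j v) * bernR m k u := by
    have h1 : ∀ k ∈ range (m+1),
        (∑ j ∈ range (mk m k + 1), g x y * bernR (mk m k) j v) * bernR m k u
        = g x y * bernR m k u := by
      intro k _
      rw [← Finset.mul_sum, bernR_sum, mul_one]
    rw [Finset.sum_congr rfl h1, ← Finset.mul_sum, bernR_sum, mul_one]
  have key : BivCl α β (b m) φ₁ φ₂ m (mk m) g x y - g x y
      = ∑ k ∈ range (m+1),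
          (∑ j ∈ range (mk m k + 1), (G k j - g x y) * bernR (mk m k) j v) * bernR m k u := by
    rw [e1]
    nth_rewrite 1 [e2]
    rw [← Finset.sum_sub_distrib]
    refine Finset.sum_congr rfl fun k hk => ?_
    rw [← Finset.sum_mul, ← sub_mul, ← Finset.sum_sub_distrib]
    congr 1
    refine Finset.sum_congr rfl fun j hj => ?_
    ring
  -- the good-case estimate
  have hgood : ∀ k ∈ range (m+1), |(k:ℝ)/m - u| < δ₁ →
      ∀ j ∈ range (mk m k + 1), |(j:ℝ)/(mk m k) - v| < δ₂ → |G k j - g x y| ≤ ε/2 := by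
    intro k hk hk1 j hj hj2
    obtain ⟨X, hXdef⟩ : ∃ X : ℝ, X = (β - α) * b m * ((k : ℝ) / m) + α * b m := ⟨_, rfl⟩
    have hXx : |X - x| < δx := by
      have h1 : X - x = (β - α) * b m * ((k:ℝ)/m - u) := by
        rw [mul_sub, hcu, hXdef]; ring
      rw [h1, abs_mul, abs_of_pos hc0]
      calc (β - α) * b m * |(k:ℝ)/m - u| < (β - α) * b m * δ₁ :=
            mul_lt_mul_of_pos_left hk1 hc0
        _ = δx := by rw [hδ₁def, mul_div_cancel₀ _ hc]
    have hφ1 : |φ₁ X - φ₁ x| < δg/9 := by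
      have := hφ₁' (a := X) (b := x) (by
        rw [Real.dist_eq]
        exact lt_of_lt_of_le hXx hδxp₁)
      rwa [Real.dist_eq] at this
    have hφ2 : |φ₂ X - φ₂ x| < δg/9 := by
      have := hφ₂' (a := X) (b := x) (by
        rw [Real.dist_eq]
        exact lt_of_lt_of_le hXx hδxp₂)
      rwa [Real.dist_eq] at this
    have hdk : |φ₂ X - φ₁ X| ≤ D := by
      calc |φ₂ X - φ₁ X| ≤ |φ₂ X| + |φ₁ X| := abs_sub _ _
        _ ≤ C₂ + C₁ := add_le_add (hC₂ X) (hC₁ X)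
        _ = D := by rw [hDdef]; ring
    obtain ⟨Y, hYdef⟩ : ∃ Y : ℝ, Y = (φ₂ X - φ₁ X) * ((j : ℝ) / (mk m k)) + φ₁ X := ⟨_, rfl⟩
    have hYy : |Y - y| < δg := by
      have hdec : Y - y = (φ₂ X - φ₁ X) * ((j:ℝ)/(mk m k) - v)
          + ((φ₂ X - φ₁ X) - (φ₂ x - φ₁ x)) * v + (φ₁ X - φ₁ x) := by
        have hy' : y = (φ₂ x - φ₁ x) * v + φ₁ x := by rw [hdv]; ring
        rw [hYdef, hy']; ring
      have t1 : |(φ₂ X - φ₁ X) * ((j:ℝ)/(mk m k) - v)| ≤ D * δ₂ := by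
        rw [abs_mul]
        exact mul_le_mul hdk hj2.le (abs_nonneg _) hD0
      have t2 : |((φ₂ X - φ₁ X) - (φ₂ x - φ₁ x)) * v| ≤ δg/9 + δg/9 := by
        rw [abs_mul]
        have hv1 : |v| ≤ 1 := by rw [abs_of_nonneg hv.1]; exact hv.2
        calc |((φ₂ X - φ₁ X) - (φ₂ x - φ₁ x))| * |v|
            ≤ (|φ₂ X - φ₂ x| + |φ₁ X - φ₁ x|) * 1 := by
              apply mul_le_mul _ hv1 (abs_nonneg _) (by positivity)
              calc |((φ₂ X - φ₁ X) - (φ₂ x - φ₁ x))| = |(φ₂ X - φ₂ x) - (φ₁ X - φ₁ x)| := by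
                    ring_nf
                _ ≤ |φ₂ X - φ₂ x| + |φ₁ X - φ₁ x| := abs_sub _ _
          _ ≤ δg/9 + δg/9 := by rw [mul_one]; linarith
      calc |Y - y| ≤ |(φ₂ X - φ₁ X) * ((j:ℝ)/(mk m k) - v)|
            + |((φ₂ X - φ₁ X) - (φ₂ x - φ₁ x)) * v| + |φ₁ X - φ₁ x| := by
            rw [hdec]
            exact le_trans (abs_add_le _ _) (add_le_add_left (abs_add_le _ _) _)
        _ < D * δ₂ + (δg/9 + δg/9) + δg/9 := by
            have := t1; have := t2; linarith
        _ ≤ δg/3 + δg/3 := by linarith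
        _ < δg := by linarith
    have hdist : dist ((X, Y) : ℝ × ℝ) ((x, y) : ℝ × ℝ) < δg := by
      rw [Prod.dist_eq]
      apply max_lt
      · rw [Real.dist_eq]
        exact lt_of_lt_of_le hXx hδxg
      · rw [Real.dist_eq]; exact hYy
    have hfin := hgu' (a := ((X, Y) : ℝ × ℝ)) (b := ((x, y) : ℝ × ℝ)) hdist
    rw [Real.dist_eq] at hfin
    have hfin' : |g X Y - g x y| ≤ ε/2 := le_of_lt hfin
    have hGXY : G k j = g X Y := by rw [hGdef, hYdef, hXdef]
    rw [hGXY]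
    exact hfin'
  -- the inner tail arithmetic
  have hinner : ∀ k ∈ range (m+1), M * (1/(4*((mk m k) : ℝ)*δ₂^2)) ≤ ε/8 := by
    intro k hk
    have hkm : k ≤ m := Finset.mem_range_succ_iff.mp hk
    have hC₀le : (C₀ : ℝ) ≤ (mk m k : ℝ) := by exact_mod_cast hN₂ m hmN₂ k hkm
    have hnk : (0:ℝ) < (mk m k : ℝ) := by exact_mod_cast hmk m k hkm
    have h1 : 2 * M / (δ₂^2 * ε) < (mk m k : ℝ) := lt_of_lt_of_le hC₀ hC₀le
    have h2 : 2 * M < (mk m k : ℝ) * (δ₂^2 * ε) := by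
      rw [div_lt_iff₀ (by positivity)] at h1
      linarith
    rw [mul_one_div, div_le_div_iff₀ (by positivity) (by norm_num)]
    have h3 : ε * (4 * (mk m k:ℝ) * δ₂^2) = 4 * ((mk m k:ℝ) * (δ₂^2 * ε)) := by ring
    linarith
  -- the outer tail arithmetic
  have houter : M * (1/(4*(m:ℝ)*δ₁^2)) ≤ ε/8 := by
    have hbm2 : (b m)^2 / (m:ℝ) < κ := by
      have := hN₁ m hmN₁
      rw [Real.dist_eq, sub_zero] at this
      exact lt_of_abs_lt this
    have hδ₁sq : δ₁^2 = δx^2 / ((β - α)^2 * (b m)^2) := by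
      rw [hδ₁def, div_pow, mul_pow]
    have hβα' : β - α ≠ 0 := ne_of_gt hβα
    have hδx' : δx ≠ 0 := ne_of_gt hδxpos
    have hm' : (m:ℝ) ≠ 0 := ne_of_gt hmr
    have hbm' : b m ≠ 0 := ne_of_gt hbm
    have heq : M * (1/(4*(m:ℝ)*δ₁^2)) = M*(β - α)^2/(4*δx^2) * ((b m)^2/(m:ℝ)) := by
      rw [hδ₁def, div_pow]
      field_simp
    have hfac : 0 ≤ M*(β - α)^2/(4*δx^2) :=
      div_nonneg (mul_nonneg hM0.le (sq_nonneg _)) (by positivity)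
    have hM' : M ≠ 0 := ne_of_gt hM0
    calc M * (1/(4*(m:ℝ)*δ₁^2)) = M*(β - α)^2/(4*δx^2) * ((b m)^2/(m:ℝ)) := heq
      _ ≤ M*(β - α)^2/(4*δx^2) * κ := mul_le_mul_of_nonneg_left hbm2.le hfac
      _ = ε/8 := by rw [hκdef]; field_simp; ring
  -- conclude
  have hmk' : ∀ k ∈ range (m+1), 1 ≤ mk m k := fun k hk =>
    hmk m k (Finset.mem_range_succ_iff.mp hk)
  have hfinal := double_bound (n := mk m) G (g x y) hm1 hmk' hu hv hδ₁pos hδ₂pos hM0.le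
    (fun k j => by rw [hGdef]; exact hMdiff _ _ x y) (by linarith) (by linarith) hinner hgood
  rw [key]
  calc |∑ k ∈ range (m+1),
        (∑ j ∈ range (mk m k + 1), (G k j - g x y) * bernR (mk m k) j v) * bernR m k u|
      ≤ (ε/2 + ε/8) + M * (1/(4*(m:ℝ)*δ₁^2)) := hfinal
    _ ≤ ε/2 + ε/8 + ε/8 := by linarith
    _ < ε := by linarith
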